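/- The generalized Helberg code C_n(q,d,m,r) is a d-deletion correcting code: for any two distinct codewords x, y ∈ C_n(q,d,m,r) and any subsets D, E ⊆ {1,…,n} with |D| = |E| ≤ d, the deleted words x^{(D)} and y^{(E)} are distinct. -/

import Mathlib

/-- Weight sequence: `W p d i` = w_i(q,d) where p = q-1; w_i = 0 for i ≤ 0 (encoded by
ℕ truncated subtraction together with `W p d 0 = 0`), and w_i = 1 + p·∑_{j=1}^d w_{i-j}
for i ≥ 1. -/
def W (p d : ℕ) : ℕ → ℕ
  | 0 => 0
  | (i+1) => 1 + p * ∑ j ∈ Finset.range d, W p d (i - j)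
decreasing_by exact Nat.lt_succ_of_le (Nat.sub_le i j)

/-- Moment of a word (1-indexed): M(x) = ∑_{i=1}^{n} w_i x_i. -/
def moment (w : ℕ → ℕ) (x : List ℕ) : ℕ :=
  ∑ i ∈ Finset.range x.length, w (i + 1) * x.getD i 0

/-- Deleted word x^{(D)}: delete the symbols at the (1-indexed) positions in D,
keeping the remaining symbols in order. -/
def deleteD (x : List ℕ) (D : Finset ℕ) : List ℕ :=
  ((List.range x.length).filter (fun i => (i + 1) ∉ D)).map (fun i => x.getD i 0)

lemma W_succ (p d i : ℕ) : W p d (i+1) = 1 + p * ∑ j ∈ Finset.range d, W p d (i - j) := by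
  rw [W]

lemma W_zero (p d : ℕ) : W p d 0 = 0 := by rw [W]

lemma W_mono (p d : ℕ) : Monotone (W p d) := by
  apply monotone_nat_of_le_succ
  intro i
  induction i using Nat.strong_induction_on with
  | _ i ih =>
    match i with
    | 0 => simp [W]
    | (i+1) =>
      rw [W_succ, W_succ]
      gcongr with j hj
      rcases le_or_gt j i with h|h
      · have h' : i + 1 - j = (i - j) + 1 := by omega
        rw [h']; exact ih (i-j) (by omega)
      · have h' : i - j = 0 := by omega
        rw [h', W_zero p d]; exact Nat.zero_le _

lemma moment_nil (w : ℕ → ℕ) : moment w [] = 0 := by simp [moment]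

lemma moment_concat (w : ℕ → ℕ) (x : List ℕ) (a : ℕ) :
    moment w (x ++ [a]) = moment w x + w (x.length + 1) * a := by
  unfold moment
  rw [List.length_append, List.length_singleton, Finset.sum_range_succ]
  congr 1
  · apply Finset.sum_congr rfl; intro i hi; rw [Finset.mem_range] at hi
    congr 1
    rw [List.getD_eq_getElem _ _ (by simp; omega), List.getD_eq_getElem _ _ hi,
      List.getElem_append_left]
  · congr 1
    rw [List.getD_eq_getElem _ _ (by simp)]
    simp

lemma take_sublist_take : ∀ {z x : List ℕ}, z.Sublist x →
    ∀ j, (z.take j).Sublist (x.take (j + (x.length - z.length)))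
  | _, _, List.Sublist.slnil, j => by simp
  | z, _, List.Sublist.cons (l₂ := x) a h, j => by
    have hl : z.length ≤ x.length := h.length_le
    have h1 : (a :: x).length - z.length = (x.length - z.length) + 1 := by
      simp; omega
    rw [h1, show j + (x.length - z.length + 1) = (j + (x.length - z.length)) + 1 by omega,
      List.take_succ_cons]
    exact (take_sublist_take h j).cons a
  | _, _, List.Sublist.cons_cons (l₁ := z) (l₂ := x) a h, j => by
    have hl : z.length ≤ x.length := h.length_le
    have h1 : (a :: x).length - (a :: z).length = x.length - z.length := by simp
    rw [h1]
    cases j with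
    | zero => simp
    | succ j =>
      rw [List.take_succ_cons,
        show j + 1 + (x.length - z.length) = (j + (x.length - z.length)) + 1 by omega,
        List.take_succ_cons]
      exact (take_sublist_take h j).cons_cons a

lemma sublist_moment_bounds {w : ℕ → ℕ} (hw : Monotone w) {p : ℕ} :
    ∀ (x s : List ℕ), s.Sublist x → (∀ a ∈ x, a ≤ p) →
      moment w s ≤ moment w x ∧
      moment w x ≤ moment w s + p * ∑ j ∈ Finset.range (x.length - s.length), w (x.length - j) := by
  intro x
  induction x using List.reverseRecOn with
  | nil =>
    intro s hs _
    rw [List.sublist_nil.mp hs]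
    simp [moment_nil]
  | append_singleton x a ih =>
    intro s hs hbd
    have hbx : ∀ b ∈ x, b ≤ p := fun b hb => hbd b (by simp [hb])
    have ha : a ≤ p := hbd a (by simp)
    have hs' : s.reverse.Sublist (a :: x.reverse) := by
      have := hs.reverse; simpa using this
    rcases List.sublist_cons_iff.mp hs' with hcase | ⟨r, hr1, hr2⟩
    · -- s <+ x
      have hsx : s.Sublist x := by
        have := hcase.reverse; simpa using this
      obtain ⟨h1, h2⟩ := ih s hsx hbx
      have hsl : s.length ≤ x.length := hsx.length_le
      have hma : w (x.length + 1) * a ≤ p * w (x.length + 1) := by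
        rw [mul_comm]; exact Nat.mul_le_mul_right _ ha
      constructor
      · rw [moment_concat]
        exact le_trans h1 (Nat.le_add_right _ _)
      · rw [moment_concat]
        simp only [List.length_append, List.length_singleton]
        rw [show x.length + 1 - s.length = (x.length - s.length) + 1 from by omega,
          Finset.sum_range_succ']
        have hsum : ∑ j ∈ Finset.range (x.length - s.length), w (x.length + 1 - (j + 1)) =
            ∑ j ∈ Finset.range (x.length - s.length), w (x.length - j) := by
          apply Finset.sum_congr rfl; intro j hj; congr 1; omega
        rw [hsum, show x.length + 1 - 0 = x.length + 1 from rfl, mul_add]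
        omega
    · -- s = s' ++ [a], s' <+ x
      have hsr : s = r.reverse ++ [a] := by
        have := congrArg List.reverse hr1; simpa using this
      have hs'x : r.reverse.Sublist x := by
        have := hr2.reverse; simpa using this
      obtain ⟨h1, h2⟩ := ih r.reverse hs'x hbx
      have hsl : r.reverse.length ≤ x.length := hs'x.length_le
      have hmono : w (r.reverse.length + 1) ≤ w (x.length + 1) := hw (by omega)
      constructor
      · rw [hsr, moment_concat, moment_concat]
        exact Nat.add_le_add h1 (Nat.mul_le_mul_right a hmono)
      · rw [hsr, moment_concat, moment_concat]
        simp only [List.length_append, List.length_singleton]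
        rw [show x.length + 1 - (r.reverse.length + 1) = x.length - r.reverse.length from by omega]
        have hid : ∑ j ∈ Finset.range (x.length - r.reverse.length), w (x.length + 1 - j)
              + w (r.reverse.length + 1) =
            w (x.length + 1) + ∑ j ∈ Finset.range (x.length - r.reverse.length), w (x.length - j) := by
          have e1 := Finset.sum_range_succ (fun j => w (x.length + 1 - j)) (x.length - r.reverse.length)
          have e2 := Finset.sum_range_succ' (fun j => w (x.length + 1 - j)) (x.length - r.reverse.length)
          have e3 : ∑ j ∈ Finset.range (x.length - r.reverse.length), w (x.length + 1 - (j + 1)) =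
              ∑ j ∈ Finset.range (x.length - r.reverse.length), w (x.length - j) := by
            apply Finset.sum_congr rfl; intro j hj; congr 1; omega
          have e4 : x.length + 1 - (x.length - r.reverse.length) = r.reverse.length + 1 := by omega
          rw [e3] at e2
          rw [e4] at e1
          simp only [Nat.sub_zero] at e2
          omega
        have hid' : p * ∑ j ∈ Finset.range (x.length - r.reverse.length), w (x.length + 1 - j)
              + p * w (r.reverse.length + 1) =
            p * w (x.length + 1)
              + p * ∑ j ∈ Finset.range (x.length - r.reverse.length), w (x.length - j) := by
          rw [← mul_add, ← mul_add, hid]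
        have hrr : a * w (x.length + 1) + p * w (r.reverse.length + 1) ≤
            a * w (r.reverse.length + 1) + p * w (x.length + 1) :=
          mul_add_mul_le_mul_add_mul ha hmono
        have g1 : w (x.length + 1) * a = a * w (x.length + 1) := mul_comm _ _
        have g2 : w (r.reverse.length + 1) * a = a * w (r.reverse.length + 1) := mul_comm _ _
        omega

lemma moment_take (w : ℕ → ℕ) (x : List ℕ) (k : ℕ) (hk : k ≤ x.length) :
    moment w (x.take k) = ∑ i ∈ Finset.range k, w (i + 1) * x.getD i 0 := by
  unfold moment
  rw [List.length_take, min_eq_left hk]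
  apply Finset.sum_congr rfl
  intro i hi; rw [Finset.mem_range] at hi
  congr 1
  rw [List.getD_eq_getElem _ _ (by rw [List.length_take]; omega),
    List.getD_eq_getElem _ _ (by omega)]
  exact List.getElem_take

lemma diff_bound (p d : ℕ) (u v z' : List ℕ) (hzu : z'.Sublist u) (hzv : z'.Sublist v)
    (hlen : v.length = u.length) (ht : u.length - z'.length ≤ d)
    (hu : ∀ a ∈ u, a ≤ p) (hv : ∀ a ∈ v, a ≤ p) :
    (moment (W p d) u : ℤ) - moment (W p d) v ≤ (W p d (u.length + 1) : ℤ) - 1 := by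
  obtain ⟨hu1, hu2⟩ := sublist_moment_bounds (W_mono p d) u z' hzu hu
  obtain ⟨hv1, hv2⟩ := sublist_moment_bounds (W_mono p d) v z' hzv hv
  have hS : p * ∑ j ∈ Finset.range (u.length - z'.length), W p d (u.length - j) + 1 ≤
      W p d (u.length + 1) := by
    rw [W_succ]
    have hsub : ∑ j ∈ Finset.range (u.length - z'.length), W p d (u.length - j) ≤
        ∑ j ∈ Finset.range d, W p d (u.length - j) :=
      Finset.sum_le_sum_of_subset (Finset.range_subset_range.mpr ht)
    have := Nat.mul_le_mul_left p hsub
    omega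
  omega

theorem moment_ne (p d : ℕ) (x y z : List ℕ) (hzx : z.Sublist x) (hzy : z.Sublist y)
    (hlen : y.length = x.length) (ht : x.length - z.length ≤ d)
    (hx : ∀ a ∈ x, a ≤ p) (hy : ∀ a ∈ y, a ≤ p) (hne : x ≠ y) :
    moment (W p d) x ≠ moment (W p d) y := by
  intro heq
  set n := x.length with hn
  have hzl : z.length ≤ n := hzx.length_le
  classical
  set S := (Finset.range n).filter (fun i => x.getD i 0 ≠ y.getD i 0) with hS
  have hSne : S.Nonempty := by
    rw [Finset.filter_nonempty_iff]
    by_contra h; push_neg at h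
    apply hne
    apply List.ext_getElem (by omega)
    intro i h1 h2
    have := h i (Finset.mem_range.mpr (by omega))
    rwa [List.getD_eq_getElem _ _ h1, List.getD_eq_getElem _ _ h2] at this
  set ℓ := S.max' hSne with hℓdef
  have hℓS : ℓ ∈ S := S.max'_mem hSne
  rw [hS, Finset.mem_filter, Finset.mem_range] at hℓS
  obtain ⟨hℓn, hℓne⟩ := hℓS
  have htail : ∀ i, ℓ < i → x.getD i 0 = y.getD i 0 := by
    intro i hi
    by_cases hin : i < n
    · by_contra hne'
      have : i ∈ S := by rw [hS, Finset.mem_filter, Finset.mem_range]; exact ⟨hin, hne'⟩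
      have := Finset.le_max' S i this
      omega
    · rw [List.getD_eq_default _ _ (by omega), List.getD_eq_default _ _ (by omega)]
  -- common sublist of the prefixes
  set t := n - z.length with htdef
  set z' := z.take (ℓ - t) with hz'def
  have hz'x : z'.Sublist (x.take ℓ) := by
    rcases le_or_gt t ℓ with h | h
    · have := take_sublist_take hzx (ℓ - t)
      rwa [show (ℓ - t) + (x.length - z.length) = ℓ from by omega] at this
    · rw [hz'def, show ℓ - t = 0 from by omega, List.take_zero]
      exact List.nil_sublist _
  have hz'y : z'.Sublist (y.take ℓ) := by
    rcases le_or_gt t ℓ with h | h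
    · have := take_sublist_take hzy (ℓ - t)
      rwa [show (ℓ - t) + (y.length - z.length) = ℓ from by omega] at this
    · rw [hz'def, show ℓ - t = 0 from by omega, List.take_zero]
      exact List.nil_sublist _
  have hxtl : (x.take ℓ).length = ℓ := by rw [List.length_take]; omega
  have hytl : (y.take ℓ).length = ℓ := by rw [List.length_take]; omega
  have hz'l : z'.length = ℓ - t := by
    rw [hz'def, List.length_take]; omega
  have ht' : (x.take ℓ).length - z'.length ≤ d := by rw [hxtl, hz'l]; omega
  have hxt : ∀ a ∈ x.take ℓ, a ≤ p := fun a haa => hx a ((List.take_prefix _ _).subset haa)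
  have hyt : ∀ a ∈ y.take ℓ, a ≤ p := fun a haa => hy a ((List.take_prefix _ _).subset haa)
  have hb1 := diff_bound p d (x.take ℓ) (y.take ℓ) z' hz'x hz'y (by omega) ht' hxt hyt
  have hb2 := diff_bound p d (y.take ℓ) (x.take ℓ) z' hz'y hz'x (by omega)
    (by rw [hytl, hz'l]; omega) hyt hxt
  rw [hxtl] at hb1
  rw [hytl] at hb2
  -- decompose the difference of moments
  have hMx : (moment (W p d) x : ℤ) =
      ∑ i ∈ Finset.range n, (W p d (i + 1) : ℤ) * (x.getD i 0 : ℤ) := by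
    unfold moment; rw [← hn]; push_cast; rfl
  have hMy : (moment (W p d) y : ℤ) =
      ∑ i ∈ Finset.range n, (W p d (i + 1) : ℤ) * (y.getD i 0 : ℤ) := by
    unfold moment; rw [hlen]; push_cast; rfl
  have hdiff : (0 : ℤ) =
      ∑ i ∈ Finset.range n, (W p d (i + 1) : ℤ) * ((x.getD i 0 : ℤ) - (y.getD i 0 : ℤ)) := by
    have : (moment (W p d) x : ℤ) - moment (W p d) y = 0 := by
      rw [heq]; ring
    rw [hMx, hMy] at this
    rw [← this, ← Finset.sum_sub_distrib]
    apply Finset.sum_congr rfl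
    intro i _; ring
  have hstep : ∑ i ∈ Finset.range n, (W p d (i + 1) : ℤ) * ((x.getD i 0 : ℤ) - (y.getD i 0 : ℤ)) =
      ∑ i ∈ Finset.range (ℓ + 1), (W p d (i + 1) : ℤ) * ((x.getD i 0 : ℤ) - (y.getD i 0 : ℤ)) := by
    symm
    apply Finset.sum_subset (Finset.range_subset_range.mpr (by omega))
    intro i _ hi2
    rw [Finset.mem_range] at hi2
    rw [htail i (by omega)]
    ring
  rw [hstep, Finset.sum_range_succ] at hdiff
  -- the head sum equals difference of prefix moments
  have hhead : ∑ i ∈ Finset.range ℓ, (W p d (i + 1) : ℤ) * ((x.getD i 0 : ℤ) - (y.getD i 0 : ℤ)) =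
      (moment (W p d) (x.take ℓ) : ℤ) - moment (W p d) (y.take ℓ) := by
    rw [moment_take _ _ _ (by omega), moment_take _ _ _ (by omega)]
    push_cast
    rw [← Finset.sum_sub_distrib]
    apply Finset.sum_congr rfl
    intro i _; ring
  rw [hhead] at hdiff
  -- now derive contradiction
  set c := (W p d (ℓ + 1) : ℤ) with hcdef
  have hc1 : (1 : ℤ) ≤ c := by
    rw [hcdef]
    have : 1 ≤ W p d (ℓ + 1) := by rw [W_succ]; omega
    exact_mod_cast this
  set A := (x.getD ℓ 0 : ℤ) - (y.getD ℓ 0 : ℤ) with hAdef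
  have hA : A ≠ 0 := by
    rw [hAdef, sub_ne_zero]
    exact_mod_cast hℓne
  rcases hA.lt_or_gt with h | h
  · have hA1 : A ≤ -1 := by omega
    have : c * A ≤ c * (-1) := mul_le_mul_of_nonneg_left hA1 (by omega)
    linarith
  · have hA1 : 1 ≤ A := by omega
    have : c * 1 ≤ c * A := mul_le_mul_of_nonneg_left hA1 (by omega)
    linarith

lemma map_range_getD (x : List ℕ) : (List.range x.length).map (fun i => x.getD i 0) = x := by
  apply List.ext_getElem (by simp)
  intro i h1 h2
  simp only [List.getElem_map, List.getElem_range]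
  exact List.getD_eq_getElem x 0 h2

lemma deleteD_sublist (x : List ℕ) (D : Finset ℕ) : (deleteD x D).Sublist x := by
  have h1 : ((List.range x.length).filter (fun i => (i + 1) ∉ D)).Sublist
      (List.range x.length) := List.filter_sublist
  have h2 := h1.map (fun i => x.getD i 0)
  rwa [map_range_getD] at h2

lemma filter_length_split (l : List ℕ) (p : ℕ → Bool) :
    (l.filter p).length + (l.filter (fun a => !(p a))).length = l.length := by
  induction l with
  | nil => simp
  | cons a l ih =>
    by_cases h : p a <;> simp [List.filter_cons, h] <;> omega

lemma deleteD_length (x : List ℕ) (D : Finset ℕ) :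
    x.length - D.card ≤ (deleteD x D).length := by
  unfold deleteD
  rw [List.length_map]
  have hsplit := filter_length_split (List.range x.length) (fun i => decide ((i + 1) ∉ D))
  have hfle : ((List.range x.length).filter
      (fun i => !(decide ((i + 1) ∉ D)))).length ≤ D.card := by
    set l := (List.range x.length).filter (fun i => !(decide ((i + 1) ∉ D))) with hl
    have hnd : l.Nodup := ((List.filter_sublist)).nodup (List.nodup_range)
    rw [← List.toFinset_card_of_nodup hnd]
    apply Finset.card_le_card_of_injOn (fun i => i + 1)
    · intro i hi
      rw [Finset.mem_coe, List.mem_toFinset, hl, List.mem_filter] at hi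
      have := hi.2
      simpa using this
    · intro i _ j _ hij
      simpa using hij
  rw [List.length_range] at hsplit
  omega


theorem helberg_d_deletion_correcting (q d n m r : ℕ) (hq : 2 ≤ q) (hd : 1 ≤ d)
    (hm : W (q - 1) d (n + 1) ≤ m) (hr : r < m)
    (x y : List ℕ) (hxlen : x.length = n) (hylen : y.length = n)
    (hx : ∀ a ∈ x, a < q) (hy : ∀ a ∈ y, a < q) (hne : x ≠ y)
    (hxcode : moment (W (q - 1) d) x % m = r) (hycode : moment (W (q - 1) d) y % m = r)
    (D E : Finset ℕ) (hD : D ⊆ Finset.Icc 1 n) (hE : E ⊆ Finset.Icc 1 n)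
    (hcard : D.card = E.card) (hd' : D.card ≤ d) :
    deleteD x D ≠ deleteD y E := by
  intro hcontra
  set p := q - 1 with hp
  have hx' : ∀ a ∈ x, a ≤ p := fun a ha => by have := hx a ha; omega
  have hy' : ∀ a ∈ y, a ≤ p := fun a ha => by have := hy a ha; omega
  set z := deleteD x D with hz
  have hzx : z.Sublist x := deleteD_sublist x D
  have hzy : z.Sublist y := by rw [hcontra]; exact deleteD_sublist y E
  have hzl : x.length - z.length ≤ d := by
    have h1 : x.length - D.card ≤ z.length := deleteD_length x D
    have h2 := hzx.length_le
    omega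
  have hlen' : y.length = x.length := by rw [hxlen, hylen]
  have hne' : moment (W p d) x ≠ moment (W p d) y :=
    moment_ne p d x y z hzx hzy hlen' hzl hx' hy' hne
  have hmod : (moment (W p d) y) ≡ (moment (W p d) x) [MOD m] := by
    unfold Nat.ModEq; rw [hxcode, hycode]
  have hdvd : (m : ℤ) ∣ (moment (W p d) x : ℤ) - (moment (W p d) y : ℤ) := hmod.dvd
  have hb1 := diff_bound p d x y z hzx hzy hlen' hzl hx' hy'
  have hb2 := diff_bound p d y x z hzy hzx hlen'.symm (by omega) hy' hx'
  rw [hxlen] at hb1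
  rw [hylen] at hb2
  have hne0 : (moment (W p d) x : ℤ) - (moment (W p d) y : ℤ) ≠ 0 :=
    sub_ne_zero.mpr (by exact_mod_cast hne')
  have hlb : (m : ℤ) ≤ |(moment (W p d) x : ℤ) - (moment (W p d) y : ℤ)| :=
    Int.le_of_dvd (abs_pos.mpr hne0) ((dvd_abs _ _).mpr hdvd)
  have habs : |(moment (W p d) x : ℤ) - (moment (W p d) y : ℤ)| ≤ (W p d (n + 1) : ℤ) - 1 :=
    abs_le.mpr ⟨by linarith, hb1⟩
  have hmle : (W p d (n + 1) : ℤ) ≤ m := by exact_mod_cast hm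
  linarith
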